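/- Let n₁ ≥ 1 and K = 0, let (λ₁,…,λ_{n₁}, μ₁,…,μ_{n₁}) be a real-analytic solution of the system (ODE) on an open interval I with τ not identically zero, and suppose there are real-analytic functions φ, ψ on I with μᵢ = φ·λᵢ + ψ for all i = 1,…,n₁. Then on I: φ' = −(τ/2)(φ² + 1) + φψ and ψ' = (ψ − (τ/2)φ)·ψ. -/

import Mathlib

/-- Lemma (`dvp,dpsi`): if `μᵢ = φλᵢ + ψ` for a solution of the ODE system with
`K = 0` and `τ` not identically zero, then `φ' = -(τ/2)(φ²+1) + φψ` and
`ψ' = (ψ - (τ/2)φ)ψ`. -/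
theorem stmt_8 (n₁ : ℕ) (hn : 1 ≤ n₁) (K : ℝ) (hK : K = 0)
    (I : Set ℝ) (hI : IsOpen I) (hIconn : I.OrdConnected)
    (lam mu : Fin n₁ → ℝ → ℝ)
    (hlam : ∀ i, AnalyticOnNhd ℝ (lam i) I)
    (hmu : ∀ i, AnalyticOnNhd ℝ (mu i) I)
    (tau : ℝ → ℝ) (htau : ∀ t, tau t = (2/3) * ∑ i, lam i t)
    (hode1 : ∀ i, ∀ t ∈ I, HasDerivAt (lam i) ((tau t / 2 + lam i t) * mu i t) t)
    (hode2 : ∀ i, ∀ t ∈ I,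
      HasDerivAt (mu i) ((mu i t) ^ 2 - tau t / 2 * lam i t + K) t)
    (hode3 : ∀ t ∈ I,
      -(deriv (deriv tau) t) + deriv tau t * (∑ i, mu i t)
        + tau t * ((tau t) ^ 2 / 4 - ((n₁ : ℝ) + 1) * K + ∑ i, (lam i t) ^ 2) = 0)
    (htau_ne : ¬ ∀ t ∈ I, tau t = 0)
    (phi psi : ℝ → ℝ)
    (hphi : AnalyticOnNhd ℝ phi I) (hpsi : AnalyticOnNhd ℝ psi I)
    (hlin : ∀ i, ∀ t ∈ I, mu i t = phi t * lam i t + psi t) :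
    ∀ t ∈ I,
      deriv phi t = -(tau t / 2) * ((phi t) ^ 2 + 1) + phi t * psi t ∧
      deriv psi t = (psi t - tau t / 2 * phi t) * psi t := by
  subst hK
  have hI' : ∀ t ∈ I, I ∈ nhds t := fun t ht => hI.mem_nhds ht
  -- the key pointwise relation `lam i * A + B = 0`
  have key : ∀ i, ∀ t ∈ I,
      lam i t * (deriv phi t + tau t / 2 * ((phi t) ^ 2 + 1) - phi t * psi t)
        + (deriv psi t - (psi t - tau t / 2 * phi t) * psi t) = 0 := by
    intro i t ht
    have hdphi : HasDerivAt phi (deriv phi t) t :=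
      (hphi t ht).differentiableAt.hasDerivAt
    have hdpsi : HasDerivAt psi (deriv psi t) t :=
      (hpsi t ht).differentiableAt.hasDerivAt
    have hg : HasDerivAt (fun s => phi s * lam i s + psi s)
        (deriv phi t * lam i t + phi t * ((tau t / 2 + lam i t) * mu i t)
          + deriv psi t) t :=
      (hdphi.mul (hode1 i t ht)).add hdpsi
    have hev : mu i =ᶠ[nhds t] (fun s => phi s * lam i s + psi s) :=
      Filter.eventually_of_mem (hI' t ht) (fun s hs => hlin i s hs)
    have h2 : HasDerivAt (mu i)
        (deriv phi t * lam i t + phi t * ((tau t / 2 + lam i t) * mu i t)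
          + deriv psi t) t := hg.congr_of_eventuallyEq hev
    have h3 := (hode2 i t ht).unique h2
    rw [hlin i t ht] at h3
    linear_combination -h3
  by_cases hsep : ∃ t₁ ∈ I, ∃ i j : Fin n₁, lam i t₁ ≠ lam j t₁
  · -- two of the λ's differ somewhere: identity theorem
    obtain ⟨t₁, ht₁, i, j, hij⟩ := hsep
    have htau_an : AnalyticOnNhd ℝ tau I := by
      have : tau = fun t => (2/3 : ℝ) * ∑ k, lam k t := funext htau
      rw [this]
      exact analyticOnNhd_const.mul
        (Finset.analyticOnNhd_fun_sum Finset.univ (fun k _ => hlam k))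
    set A : ℝ → ℝ :=
      fun t => deriv phi t + tau t / 2 * ((phi t) ^ 2 + 1) - phi t * psi t with hA
    have hA_an : AnalyticOnNhd ℝ A I := by
      have h1 : AnalyticOnNhd ℝ (deriv phi) I := hphi.deriv
      have h2 : AnalyticOnNhd ℝ (fun t => tau t / 2 * ((phi t) ^ 2 + 1)) I := by
        have : AnalyticOnNhd ℝ (fun t => tau t / 2) I := by
          simp only [div_eq_mul_inv]
          exact htau_an.mul analyticOnNhd_const
        exact this.mul ((hphi.pow 2).add analyticOnNhd_const)
      exact (h1.add h2).sub (hphi.mul hpsi)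
    have hne : ∀ᶠ s in nhds t₁, lam i s - lam j s ≠ 0 := by
      have hcont : ContinuousAt (fun s => lam i s - lam j s) t₁ :=
        ((hlam i t₁ ht₁).continuousAt).sub ((hlam j t₁ ht₁).continuousAt)
      exact hcont.eventually_ne (sub_ne_zero.mpr hij)
    have hAev : A =ᶠ[nhds t₁] 0 := by
      filter_upwards [hne, hI' t₁ ht₁] with s hs hsI
      have h1 := key i s hsI
      have h2 := key j s hsI
      have h3 : (lam i s - lam j s) * A s = 0 := by
        simp only [hA]; linear_combination h1 - h2
      have := (mul_eq_zero.mp h3).resolve_left hs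
      simpa using this
    have hAzero : Set.EqOn A 0 I :=
      hA_an.eqOn_zero_of_preconnected_of_eventuallyEq_zero
        hIconn.isPreconnected ht₁ hAev
    intro t ht
    have hA0 : A t = 0 := hAzero ht
    simp only [hA] at hA0
    have hB0 := key i t ht
    rw [show deriv phi t + tau t / 2 * ((phi t) ^ 2 + 1) - phi t * psi t = 0
      from hA0] at hB0
    constructor
    · linarith
    · linarith [hB0]
  · -- all λ's coincide on I : derive a contradiction
    exfalso
    push_neg at hsep
    push_neg at htau_ne
    obtain ⟨t₀, ht₀, hτ0⟩ := htau_ne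
    set c : ℝ := (n₁ : ℝ) with hc
    have hc1 : (1 : ℝ) ≤ c := by rw [hc]; exact_mod_cast hn
    have hc0 : c ≠ 0 := by linarith
    set i0 : Fin n₁ := ⟨0, hn⟩ with hi0
    -- τ = (2c/3) λ₀ on I
    have hl : ∀ t ∈ I, 2 * c * lam i0 t = 3 * tau t := by
      intro t ht
      rw [htau t, Finset.sum_congr rfl (fun k _ => hsep t ht k i0),
        Finset.sum_const, Finset.card_univ, Fintype.card_fin, nsmul_eq_mul]
      rw [← hc]; ring
    -- all μ's coincide where τ ≠ 0
    have hμeq : ∀ t ∈ I, tau t ≠ 0 → ∀ i, mu i t = mu i0 t := by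
      intro t ht htne i
      have hev : lam i0 =ᶠ[nhds t] lam i :=
        Filter.eventually_of_mem (hI' t ht) (fun s hs => hsep s hs i0 i)
      have h1' : HasDerivAt (lam i0) ((tau t / 2 + lam i t) * mu i t) t :=
        (hode1 i t ht).congr_of_eventuallyEq hev
      have huniq := h1'.unique (hode1 i0 t ht)
      rw [hsep t ht i i0] at huniq
      have hfac : tau t / 2 + lam i0 t ≠ 0 := by
        intro h
        have h2 := hl t ht
        have h3 : tau t * (c + 3) = 0 := by linear_combination 2 * c * h - h2
        rcases mul_eq_zero.mp h3 with h4 | h4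
        · exact htne h4
        · linarith
      exact mul_left_cancel₀ hfac huniq
    -- derivative of τ
    have hτ'sum : ∀ t ∈ I,
        HasDerivAt tau ((2/3) * ∑ i, (tau t / 2 + lam i t) * mu i t) t := by
      intro t ht
      have hg : HasDerivAt (fun s => (2/3 : ℝ) * ∑ i, lam i s)
          ((2/3) * ∑ i, (tau t / 2 + lam i t) * mu i t) t :=
        (HasDerivAt.fun_sum (fun i _ => hode1 i t ht)).const_mul (2/3)
      exact hg.congr_of_eventuallyEq (Filter.Eventually.of_forall htau)
    have hτ' : ∀ t ∈ I, tau t ≠ 0 →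
        HasDerivAt tau ((c + 3) / 3 * (tau t * mu i0 t)) t := by
      intro t ht htne
      have h := hτ'sum t ht
      have hval : (2/3 : ℝ) * ∑ i, (tau t / 2 + lam i t) * mu i t
          = (c + 3) / 3 * (tau t * mu i0 t) := by
        rw [Finset.sum_congr rfl
          (fun i _ => by rw [hsep t ht i i0, hμeq t ht htne i]),
          Finset.sum_const, Finset.card_univ, Fintype.card_fin, nsmul_eq_mul, ← hc]
        have h2 := hl t ht
        linear_combination (mu i0 t / 3) * h2
      rwa [hval] at h
    -- the set {τ ≠ 0} ∩ I is a neighborhood of its points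
    have hN : ∀ t ∈ I, tau t ≠ 0 → ∀ᶠ s in nhds t, s ∈ I ∧ tau s ≠ 0 := by
      intro t ht htne
      have hconta : ContinuousAt tau t := (hτ'sum t ht).continuousAt
      exact (Filter.eventually_of_mem (hI' t ht) fun s hs => hs).and
        (hconta.eventually_ne htne)
    -- second derivative of τ on {τ ≠ 0}
    have hdd : ∀ t ∈ I, tau t ≠ 0 →
        deriv (deriv tau) t = (c + 3) / 3 *
          (((c + 3) / 3 * (tau t * mu i0 t)) * mu i0 t
            + tau t * ((mu i0 t) ^ 2 - tau t / 2 * lam i0 t + 0)) := by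
      intro t ht htne
      have hdev : deriv tau =ᶠ[nhds t]
          (fun s => (c + 3) / 3 * (tau s * mu i0 s)) := by
        filter_upwards [hN t ht htne] with s hs
        exact (hτ' s hs.1 hs.2).deriv
      rw [hdev.deriv_eq]
      exact (((hτ' t ht htne).mul (hode2 i0 t ht)).const_mul ((c + 3) / 3)).deriv
    -- the first polynomial relation between μ₀ and τ
    have hF : ∀ t ∈ I, tau t ≠ 0 →
        c * (c + 3) * (6 - 2 * c) * (mu i0 t) ^ 2
          - 9 / 2 * (c + 6) * (tau t) ^ 2 = 0 := by
      intro t ht htne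
      have h3 := hode3 t ht
      rw [hdd t ht htne, (hτ' t ht htne).deriv,
        Finset.sum_congr rfl (fun i (_ : i ∈ Finset.univ) => hμeq t ht htne i),
        Finset.sum_congr rfl (fun i (_ : i ∈ Finset.univ) =>
          by rw [hsep t ht i i0] : ∀ i ∈ Finset.univ, (lam i t) ^ 2 = (lam i0 t) ^ 2),
        Finset.sum_const, Finset.sum_const, Finset.card_univ, Fintype.card_fin,
        nsmul_eq_mul, nsmul_eq_mul, ← hc] at h3
      have h2 := hl t ht
      have hT : tau t * (c * (c + 3) * (6 - 2 * c) * (mu i0 t) ^ 2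
          - 9 / 2 * (c + 6) * (tau t) ^ 2) = 0 := by
        linear_combination (-9 * c) * h3
          + (tau t * ((9 * c / 2) * lam i0 t + ((3 * c + 36) / 4) * tau t)) * h2
      exact (mul_eq_zero.mp hT).resolve_left htne
    -- differentiate the relation at t₀
    have hFd : HasDerivAt
        (fun s => c * (c + 3) * (6 - 2 * c) * (mu i0 s) ^ 2
          - 9 / 2 * (c + 6) * (tau s) ^ 2)
        (c * (c + 3) * (6 - 2 * c) *
            ((2 : ℕ) * (mu i0 t₀) ^ 1 * ((mu i0 t₀) ^ 2 - tau t₀ / 2 * lam i0 t₀ + 0))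
          - 9 / 2 * (c + 6) *
            ((2 : ℕ) * (tau t₀) ^ 1 * ((c + 3) / 3 * (tau t₀ * mu i0 t₀)))) t₀ := by
      exact (((hode2 i0 t₀ ht₀).pow 2).const_mul (c * (c + 3) * (6 - 2 * c))).sub
        (((hτ' t₀ ht₀ hτ0).pow 2).const_mul (9 / 2 * (c + 6)))
    have hE : c * (c + 3) * (6 - 2 * c) *
            ((2 : ℕ) * (mu i0 t₀) ^ 1 * ((mu i0 t₀) ^ 2 - tau t₀ / 2 * lam i0 t₀ + 0))
          - 9 / 2 * (c + 6) *
            ((2 : ℕ) * (tau t₀) ^ 1 * ((c + 3) / 3 * (tau t₀ * mu i0 t₀))) = 0 := by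
      have hFev : (fun s => c * (c + 3) * (6 - 2 * c) * (mu i0 s) ^ 2
          - 9 / 2 * (c + 6) * (tau s) ^ 2) =ᶠ[nhds t₀] (fun _ => (0 : ℝ)) := by
        filter_upwards [hN t₀ ht₀ hτ0] with s hs
        exact hF s hs.1 hs.2
      have h0 : deriv (fun s => c * (c + 3) * (6 - 2 * c) * (mu i0 s) ^ 2
          - 9 / 2 * (c + 6) * (tau s) ^ 2) t₀ = 0 := by
        rw [hFev.deriv_eq]; exact deriv_const _ _
      rw [← hFd.deriv, h0]
    -- combine everything to get a contradiction
    have hF0 := hF t₀ ht₀ hτ0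
    have h2 := hl t₀ ht₀
    have hcrit : (tau t₀) ^ 2 * mu i0 t₀ * (18 * c ^ 2 + 27 * c) = 0 := by
      push_cast at hE
      linear_combination (-c) * hE + (2 * c * mu i0 t₀) * hF0
        - (c * (c + 3) * (6 - 2 * c) * tau t₀ * mu i0 t₀ / 2) * h2
    have hcpos : 18 * c ^ 2 + 27 * c ≠ 0 := by nlinarith
    have hμ0 : mu i0 t₀ = 0 := by
      rcases mul_eq_zero.mp hcrit with h | h
      · rcases mul_eq_zero.mp h with h' | h'
        · exact absurd h' (pow_ne_zero 2 hτ0)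
        · exact h'
      · exact absurd h hcpos
    rw [hμ0] at hF0
    have : (tau t₀) ^ 2 = 0 := by nlinarith
    exact hτ0 ((pow_eq_zero_iff two_ne_zero).mp this)
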